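/- Let f : ℝ^m → ℝ^n → ℝ^m, h : ℝ^m → ℝ be bounded, and U ⊆ ℝ^n be nonempty. For a control sequence u : ℕ → U define the trajectory from x by x₀ = x, x_{t+1} = f(x_t, u_t), and define the value function V(x) = inf over all control sequences u : ℕ → U of sup_{t ∈ ℕ} h(x_t). Then a state x belongs to the maximum safe invariant set S_max (the union of all safe invariant sets) only if V(x) ≤ 0; that is, S_max ⊆ {x ∈ ℝ^m | V(x) ≤ 0}. -/

import Mathlib

/-- Trajectory from `x` under control sequence `u`: `x₀ = x`, `x_{t+1} = f x_t u_t`. -/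
def trajectory {m n : ℕ} (f : (Fin m → ℝ) → (Fin n → ℝ) → (Fin m → ℝ))
    (x : Fin m → ℝ) (u : ℕ → (Fin n → ℝ)) : ℕ → (Fin m → ℝ)
  | 0 => x
  | t + 1 => f (trajectory f x u t) (u t)

/-- The Hamilton–Jacobi value function
`V(x) = inf_{u : ℕ → U} sup_{t ∈ ℕ} h (x_t)`. -/
noncomputable def hjValue {m n : ℕ} (U : Set (Fin n → ℝ))
    (f : (Fin m → ℝ) → (Fin n → ℝ) → (Fin m → ℝ))
    (h : (Fin m → ℝ) → ℝ) (x : Fin m → ℝ) : ℝ :=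
  ⨅ u : {u : ℕ → (Fin n → ℝ) // ∀ t, u t ∈ U},
    ⨆ t : ℕ, h (trajectory f x u.1 t)

/-- A set `S` of states is a safe invariant set. -/
def IsSafeInvariantSet {m n : ℕ} (U : Set (Fin n → ℝ))
    (f : (Fin m → ℝ) → (Fin n → ℝ) → (Fin m → ℝ))
    (h : (Fin m → ℝ) → ℝ) (S : Set (Fin m → ℝ)) : Prop :=
  ∀ x ∈ S, h x ≤ 0 ∧ ∃ u ∈ U, f x u ∈ S

/-- With `h` bounded and `U` nonempty, the maximum safe invariant set
`S_max = ⋃₀ {S | S is safe invariant}` is contained in the zero-sublevel set of the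
Hamilton–Jacobi value function `V`. -/
theorem maxSafeInvariantSet_subset_value_sublevel
    {m n : ℕ} (U : Set (Fin n → ℝ)) (hU : U.Nonempty)
    (f : (Fin m → ℝ) → (Fin n → ℝ) → (Fin m → ℝ))
    (h : (Fin m → ℝ) → ℝ) (hb : ∃ C : ℝ, ∀ x, |h x| ≤ C) :
    ⋃₀ {S | IsSafeInvariantSet U f h S} ⊆ {x | hjValue U f h x ≤ 0} := by
  obtain ⟨C, hC⟩ := hb
  rintro x ⟨S, hS, hxS⟩
  simp only [Set.mem_setOf_eq] at hS ⊢
  -- choose controls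
  have hc : ∀ y : {y // y ∈ S}, ∃ u, u ∈ U ∧ f y.1 u ∈ S := by
    intro y
    obtain ⟨-, u, hu, hf⟩ := hS y.1 y.2
    exact ⟨u, hu, hf⟩
  choose c hcU hcS using hc
  -- state sequence staying in S
  let s : ℕ → {y // y ∈ S} := fun t =>
    Nat.rec ⟨x, hxS⟩ (fun _ p => ⟨f p.1 (c p), hcS p⟩) t
  let useq : ℕ → (Fin n → ℝ) := fun t => c (s t)
  have hseq : ∀ t, trajectory f x useq t = (s t).1 := by
    intro t
    induction t with
    | zero => rfl
    | succ t ih => simp only [trajectory, ih]; rfl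
  -- bounded above for sup
  have bdd : ∀ u : {u : ℕ → (Fin n → ℝ) // ∀ t, u t ∈ U},
      BddAbove (Set.range fun t : ℕ => h (trajectory f x u.1 t)) := by
    intro u
    exact ⟨C, by rintro y ⟨t, rfl⟩; exact (abs_le.mp (hC _)).2⟩
  -- the inf is bounded below
  have bddI : BddBelow (Set.range fun u : {u : ℕ → (Fin n → ℝ) // ∀ t, u t ∈ U} =>
      ⨆ t : ℕ, h (trajectory f x u.1 t)) := by
    refine ⟨-C, ?_⟩
    rintro y ⟨u, rfl⟩
    calc (-C : ℝ) ≤ h (trajectory f x u.1 0) := (abs_le.mp (hC _)).1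
      _ ≤ ⨆ t : ℕ, h (trajectory f x u.1 t) := le_ciSup (bdd u) 0
  refine ciInf_le_of_le bddI ⟨useq, fun t => hcU (s t)⟩ ?_
  refine ciSup_le fun t => ?_
  rw [hseq t]
  exact (hS (s t).1 (s t).2).1
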